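/- Fix a symmetric matrix ξ and a skew-symmetric d×d real matrix a, and define δ(a,ξ) : 𝒮^d → 𝒮^d by δ(a,ξ)(π)ᵢ = πᵢξ(Σⱼ aᵢⱼπⱼ) + (Σⱼ aᵢⱼπⱼ)ξπᵢ. Then δ(a,ξ) restricted to the flag manifold ℱ is tangent to ℱ: any integral curve π(t) of this vector field starting in ℱ remains in ℱ, i.e., preserves Σᵢπᵢ(t) = I, πᵢ(t)πⱼ(t) = 0 for i≠j, and πᵢ(t)² = πᵢ(t). -/

import Mathlib

open Matrix Set

attribute [local instance] Matrix.frobeniusNormedRing Matrix.frobeniusNormedAlgebra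

section aux
variable {d : ℕ}

local notation "M" => Matrix (Fin d) (Fin d) ℝ

lemma skew_entry {a : Matrix (Fin d) (Fin d) ℝ} (ha : aᵀ = -a) (i j : Fin d) :
    a j i = -(a i j) := by
  have := congrFun (congrFun ha i) j
  simpa [Matrix.transpose_apply] using this

lemma sum_D_eq_zero (ξ a : Matrix (Fin d) (Fin d) ℝ) (ha : aᵀ = -a) (p : Fin d → M) :
    (∑ i, (p i * ξ * (∑ j, a i j • p j) + (∑ j, a i j • p j) * ξ * p i)) = 0 := by
  have e1 : ∀ i : Fin d, p i * ξ * (∑ j, a i j • p j) = ∑ j, a i j • (p i * ξ * p j) := by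
    intro i; simp [Finset.mul_sum, mul_smul_comm]
  have e2 : ∀ i : Fin d, (∑ j, a i j • p j) * ξ * p i = ∑ j, a i j • (p j * ξ * p i) := by
    intro i; simp [Finset.sum_mul, smul_mul_assoc]
  calc (∑ i, (p i * ξ * (∑ j, a i j • p j) + (∑ j, a i j • p j) * ξ * p i))
      = (∑ i, ∑ j, a i j • (p i * ξ * p j)) + ∑ i, ∑ j, a i j • (p j * ξ * p i) := by
        simp only [e1, e2, Finset.sum_add_distrib]
    _ = (∑ i, ∑ j, a i j • (p i * ξ * p j)) + ∑ i, ∑ j, a j i • (p i * ξ * p j) := by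
        congr 1; exact Finset.sum_comm
    _ = ∑ i, ∑ j, (a i j + a j i) • (p i * ξ * p j) := by
        simp [add_smul, Finset.sum_add_distrib]
    _ = 0 := by
        have h : ∀ i j : Fin d, a i j + a j i = 0 := fun i j => by rw [skew_entry ha]; ring
        simp [h]

lemma key_alg (ξ a : Matrix (Fin d) (Fin d) ℝ) (ha : aᵀ = -a)
    (p : Fin d → M) (i j : Fin d) :
    (p i * ξ * (∑ k, a i k • p k) + (∑ k, a i k • p k) * ξ * p i) * p j
      + p i * (p j * ξ * (∑ k, a j k • p k) + (∑ k, a j k • p k) * ξ * p j)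
      - (if i = j then p i * ξ * (∑ k, a i k • p k) + (∑ k, a i k • p k) * ξ * p i else 0)
    = (∑ k, a i k • p k) * ξ * (p i * p j - if i = j then p i else 0)
      + (p i * p j - if i = j then p i else 0) * ξ * (∑ k, a j k • p k)
      + (∑ k, a i k • (p i * ξ * (p k * p j - if k = j then p k else 0)))
      + (∑ k, a j k • ((p i * p k - if i = k then p i else 0) * ξ * p j)) := by
  rcases eq_or_ne i j with rfl | hij
  · have haii : a i i = 0 := by have := skew_entry ha i i; linarith
    simp only [if_pos rfl, mul_sub, sub_mul, smul_sub, mul_ite, ite_mul, mul_zero, zero_mul,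
      smul_ite, smul_zero, Finset.sum_sub_distrib, Finset.sum_ite_eq, Finset.sum_ite_eq',
      Finset.mem_univ, if_true, Finset.mul_sum, Finset.sum_mul, mul_smul_comm, smul_mul_assoc,
      add_mul, mul_add, mul_assoc, haii, zero_smul]
    abel
  · have hji : a j i = -(a i j) := skew_entry ha i j
    simp only [if_neg hij, if_neg (Ne.symm hij), mul_sub, sub_mul, smul_sub, mul_ite, ite_mul,
      mul_zero, zero_mul, smul_ite, smul_zero, Finset.sum_sub_distrib, Finset.sum_ite_eq,
      Finset.sum_ite_eq', Finset.mem_univ, if_true, Finset.mul_sum, Finset.sum_mul,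
      mul_smul_comm, smul_mul_assoc, add_mul, mul_add, mul_assoc, hji, neg_smul,
      sub_neg_eq_add, sub_zero]
    abel

end aux

/-- The vector field `δ(a,ξ)` on `𝒮^d` defined by
`δ(a,ξ)(π)ᵢ = πᵢ ξ (Σⱼ aᵢⱼπⱼ) + (Σⱼ aᵢⱼπⱼ) ξ πᵢ` is tangent to the flag manifold: an
integral curve of symmetric matrices starting at a flag preserves `Σᵢπᵢ = 1`, `πᵢπⱼ = 0`
for `i ≠ j`, and `πᵢ² = πᵢ`. -/
theorem flag_vector_field_tangent (d : ℕ)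
    (ξ a : Matrix (Fin d) (Fin d) ℝ) (hξ : ξ.IsSymm) (ha : aᵀ = -a)
    (π : ℝ → Fin d → Matrix (Fin d) (Fin d) ℝ)
    (hsymm : ∀ t i, (π t i).IsSymm)
    (hode : ∀ (t : ℝ) (i : Fin d),
      HasDerivAt (fun s => π s i)
        (π t i * ξ * (∑ j, a i j • π t j) + (∑ j, a i j • π t j) * ξ * π t i) t)
    (h0 : (∀ i, π 0 i * π 0 i = π 0 i ∧ (π 0 i).trace = 1) ∧
      (∀ i j, i ≠ j → π 0 i * π 0 j = 0) ∧ (∑ i, π 0 i) = 1) :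
    ∀ t : ℝ,
      (∑ i, π t i) = 1 ∧
      (∀ i j, i ≠ j → π t i * π t j = 0) ∧
      (∀ i, π t i * π t i = π t i) := by
  obtain ⟨h01, h02, h03⟩ := h0
  -- Part 1: the sum is constant.
  have hS : ∀ t, HasDerivAt (fun s => ∑ i, π s i) 0 t := by
    intro t
    have h := HasDerivAt.fun_sum (u := Finset.univ)
      (fun i _ => hode t i)
    rwa [sum_D_eq_zero ξ a ha (π t)] at h
  have hsum1 : ∀ t, (∑ i, π t i) = 1 := by
    intro t
    have h := is_const_of_deriv_eq_zero (𝕜 := ℝ) (f := fun s => ∑ i, π s i)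
      (fun s => (hS s).differentiableAt) (fun s => (hS s).deriv) t 0
    simpa [h03] using h
  -- Part 2: the relations πᵢπⱼ = δᵢⱼπᵢ are preserved.
  have hrel : ∀ (t : ℝ) (i j : Fin d),
      π t i * π t j = if i = j then π t i else 0 := by
    intro t₁ i₀ j₀
    set a' : ℝ := min 0 t₁ - 1 with ha'
    set b' : ℝ := max 0 t₁ + 1 with hb'
    have ha0 : a' < 0 := by
      have : min 0 t₁ ≤ 0 := min_le_left _ _
      simp only [ha']; linarith
    have hb0 : (0:ℝ) < b' := by
      have : (0:ℝ) ≤ max 0 t₁ := le_max_left _ _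
      simp only [hb']; linarith
    have hat : a' < t₁ := by
      have : min 0 t₁ ≤ t₁ := min_le_right _ _
      simp only [ha']; linarith
    have htb : t₁ < b' := by
      have : t₁ ≤ max 0 t₁ := le_max_right _ _
      simp only [hb']; linarith
    have hab : a' ≤ b' := by linarith
    -- clamp function
    set Q : ℝ → ℝ := fun t => max a' (min b' t) with hQ
    have hQmem : ∀ t, Q t ∈ Icc a' b' := by
      intro t
      constructor
      · exact le_max_left _ _
      · simp only [hQ, max_le_iff]
        exact ⟨hab, min_le_left _ _⟩
    have hQeq : ∀ t ∈ Icc a' b', Q t = t := by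
      intro t ht
      simp only [hQ]
      rw [min_eq_right ht.2, max_eq_right ht.1]
    -- bound on π over [a', b']
    have hcontπ : Continuous fun t => (fun i => π t i : Fin d → Matrix (Fin d) (Fin d) ℝ) := by
      apply continuous_pi
      intro i
      exact (Differentiable.continuous fun s => (hode s i).differentiableAt)
    obtain ⟨C, hC⟩ := IsCompact.exists_bound_of_continuousOn (isCompact_Icc (a := a') (b := b'))
      hcontπ.continuousOn
    set C' : ℝ := max C 0 with hC'
    have hC'0 : (0:ℝ) ≤ C' := le_max_right _ _
    have hbound : ∀ t ∈ Icc a' b', ∀ i, ‖π t i‖ ≤ C' := by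
      intro t ht i
      exact (norm_le_pi_norm (fun i => π t i) i).trans ((hC t ht).trans (le_max_left _ _))
    -- bound on a
    set A : ℝ := ∑ i : Fin d, ∑ k : Fin d, |a i k| with hA
    have hA0 : (0:ℝ) ≤ A :=
      Finset.sum_nonneg fun i _ => Finset.sum_nonneg fun k _ => abs_nonneg _
    have hAi : ∀ i : Fin d, (∑ k, |a i k|) ≤ A :=
      fun i => Finset.single_le_sum (f := fun i => ∑ k, |a i k|)
        (fun i _ => Finset.sum_nonneg fun k _ => abs_nonneg _) (Finset.mem_univ i)
    set K : ℝ := 4 * (A * C' * ‖ξ‖) with hK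
    have hK0 : (0:ℝ) ≤ K := by
      have := norm_nonneg ξ
      have h1 : 0 ≤ A * C' * ‖ξ‖ := mul_nonneg (mul_nonneg hA0 hC'0) this
      linarith
    -- the linear vector field
    set v : ℝ → ((Fin d × Fin d) → Matrix (Fin d) (Fin d) ℝ) →
        ((Fin d × Fin d) → Matrix (Fin d) (Fin d) ℝ) := fun t x p =>
      (∑ k, a p.1 k • π (Q t) k) * ξ * x p + x p * ξ * (∑ k, a p.2 k • π (Q t) k)
        + (∑ k, a p.1 k • (π (Q t) p.1 * ξ * x (k, p.2)))
        + (∑ k, a p.2 k • (x (p.1, k) * ξ * π (Q t) p.2)) with hv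
    have hv0 : ∀ t, v t 0 = 0 := by
      intro t; funext p; simp [hv]
    have hlin : ∀ t x y, v t x - v t y = v t (x - y) := by
      intro t x y; funext p
      simp only [hv, Pi.sub_apply, mul_sub, sub_mul, smul_sub, Finset.sum_sub_distrib]
      abel
    have hmul3 : ∀ x y z : Matrix (Fin d) (Fin d) ℝ, ‖x * y * z‖ ≤ ‖x‖ * ‖y‖ * ‖z‖ :=
      fun x y z => (norm_mul_le _ _).trans
        (mul_le_mul_of_nonneg_right (norm_mul_le _ _) (norm_nonneg _))
    have hBnorm : ∀ (t : ℝ) (i : Fin d), ‖∑ k, a i k • π (Q t) k‖ ≤ A * C' := by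
      intro t i
      calc ‖∑ k, a i k • π (Q t) k‖ ≤ ∑ k, ‖a i k • π (Q t) k‖ := norm_sum_le _ _
        _ = ∑ k, |a i k| * ‖π (Q t) k‖ := by simp [norm_smul, Real.norm_eq_abs]
        _ ≤ ∑ k, |a i k| * C' := Finset.sum_le_sum fun k _ =>
            mul_le_mul_of_nonneg_left (hbound _ (hQmem t) k) (abs_nonneg _)
        _ = (∑ k, |a i k|) * C' := by rw [Finset.sum_mul]
        _ ≤ A * C' := mul_le_mul_of_nonneg_right (hAi i) hC'0
    have hvnorm : ∀ (t : ℝ) (z : (Fin d × Fin d) → Matrix (Fin d) (Fin d) ℝ),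
        ‖v t z‖ ≤ K * ‖z‖ := by
      intro t z
      have hz0 : (0:ℝ) ≤ K * ‖z‖ := mul_nonneg hK0 (norm_nonneg _)
      rw [pi_norm_le_iff_of_nonneg hz0]
      intro p
      obtain ⟨i, j⟩ := p
      set D : ℝ := A * C' * ‖ξ‖ * ‖z‖ with hD
      have hzp : ∀ q : Fin d × Fin d, ‖z q‖ ≤ ‖z‖ := fun q => norm_le_pi_norm z q
      have h1 : ‖(∑ k, a i k • π (Q t) k) * ξ * z (i, j)‖ ≤ D := by
        calc ‖(∑ k, a i k • π (Q t) k) * ξ * z (i, j)‖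
            ≤ ‖∑ k, a i k • π (Q t) k‖ * ‖ξ‖ * ‖z (i, j)‖ := hmul3 _ _ _
          _ ≤ (A * C') * ‖ξ‖ * ‖z‖ := by gcongr; exacts [hBnorm t i, hzp _]
          _ = D := by rw [hD]
      have h2 : ‖z (i, j) * ξ * (∑ k, a j k • π (Q t) k)‖ ≤ D := by
        calc ‖z (i, j) * ξ * (∑ k, a j k • π (Q t) k)‖
            ≤ ‖z (i, j)‖ * ‖ξ‖ * ‖∑ k, a j k • π (Q t) k‖ := hmul3 _ _ _
          _ ≤ ‖z‖ * ‖ξ‖ * (A * C') := by gcongr; exacts [hzp _, hBnorm t j]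
          _ = D := by rw [hD]; ring
      have h3 : ‖∑ k, a i k • (π (Q t) i * ξ * z (k, j))‖ ≤ D := by
        calc ‖∑ k, a i k • (π (Q t) i * ξ * z (k, j))‖
            ≤ ∑ k, ‖a i k • (π (Q t) i * ξ * z (k, j))‖ := norm_sum_le _ _
          _ = ∑ k, |a i k| * ‖π (Q t) i * ξ * z (k, j)‖ := by
              simp [norm_smul, Real.norm_eq_abs]
          _ ≤ ∑ k, |a i k| * (C' * ‖ξ‖ * ‖z‖) := by
              refine Finset.sum_le_sum fun k _ => mul_le_mul_of_nonneg_left ?_ (abs_nonneg _)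
              calc ‖π (Q t) i * ξ * z (k, j)‖ ≤ ‖π (Q t) i‖ * ‖ξ‖ * ‖z (k, j)‖ := hmul3 _ _ _
                _ ≤ C' * ‖ξ‖ * ‖z‖ := by gcongr; exacts [hbound _ (hQmem t) i, hzp _]
          _ = (∑ k, |a i k|) * (C' * ‖ξ‖ * ‖z‖) := by rw [Finset.sum_mul]
          _ ≤ A * (C' * ‖ξ‖ * ‖z‖) := by
              refine mul_le_mul_of_nonneg_right (hAi i) ?_
              positivity
          _ = D := by rw [hD]; ring
      have h4 : ‖∑ k, a j k • (z (i, k) * ξ * π (Q t) j)‖ ≤ D := by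
        calc ‖∑ k, a j k • (z (i, k) * ξ * π (Q t) j)‖
            ≤ ∑ k, ‖a j k • (z (i, k) * ξ * π (Q t) j)‖ := norm_sum_le _ _
          _ = ∑ k, |a j k| * ‖z (i, k) * ξ * π (Q t) j‖ := by
              simp [norm_smul, Real.norm_eq_abs]
          _ ≤ ∑ k, |a j k| * (‖z‖ * ‖ξ‖ * C') := by
              refine Finset.sum_le_sum fun k _ => mul_le_mul_of_nonneg_left ?_ (abs_nonneg _)
              calc ‖z (i, k) * ξ * π (Q t) j‖ ≤ ‖z (i, k)‖ * ‖ξ‖ * ‖π (Q t) j‖ := hmul3 _ _ _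
                _ ≤ ‖z‖ * ‖ξ‖ * C' := by gcongr; exacts [hzp _, hbound _ (hQmem t) j]
          _ = (∑ k, |a j k|) * (‖z‖ * ‖ξ‖ * C') := by rw [Finset.sum_mul]
          _ ≤ A * (‖z‖ * ‖ξ‖ * C') := by
              refine mul_le_mul_of_nonneg_right (hAi j) ?_
              positivity
          _ = D := by rw [hD]; ring
      calc ‖v t z (i, j)‖
          ≤ ‖(∑ k, a i k • π (Q t) k) * ξ * z (i, j) + z (i, j) * ξ * (∑ k, a j k • π (Q t) k)
              + (∑ k, a i k • (π (Q t) i * ξ * z (k, j)))‖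
            + ‖∑ k, a j k • (z (i, k) * ξ * π (Q t) j)‖ := norm_add_le _ _
        _ ≤ (‖(∑ k, a i k • π (Q t) k) * ξ * z (i, j) + z (i, j) * ξ * (∑ k, a j k • π (Q t) k)‖
            + ‖∑ k, a i k • (π (Q t) i * ξ * z (k, j))‖)
            + ‖∑ k, a j k • (z (i, k) * ξ * π (Q t) j)‖ := by
              gcongr; exact norm_add_le _ _
        _ ≤ ((‖(∑ k, a i k • π (Q t) k) * ξ * z (i, j)‖
            + ‖z (i, j) * ξ * (∑ k, a j k • π (Q t) k)‖)
            + ‖∑ k, a i k • (π (Q t) i * ξ * z (k, j))‖)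
            + ‖∑ k, a j k • (z (i, k) * ξ * π (Q t) j)‖ := by
              gcongr; exact norm_add_le _ _
        _ ≤ ((D + D) + D) + D := by gcongr
        _ = K * ‖z‖ := by rw [hD, hK]; ring
    set KN : NNReal := ⟨K, hK0⟩ with hKN
    have hlip : ∀ t : ℝ, LipschitzOnWith KN (v t) univ := by
      intro t
      apply LipschitzWith.lipschitzOnWith
      apply LipschitzWith.of_dist_le_mul
      intro x y
      rw [dist_eq_norm, dist_eq_norm, hlin]
      exact hvnorm t (x - y)
    -- the error function
    set E : ℝ → (Fin d × Fin d) → Matrix (Fin d) (Fin d) ℝ := fun t p =>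
      π t p.1 * π t p.2 - if p.1 = p.2 then π t p.1 else 0 with hE
    have hE0 : E 0 = 0 := by
      funext p
      obtain ⟨i, j⟩ := p
      rcases eq_or_ne i j with rfl | hij
      · simp [hE, (h01 i).1]
      · simp [hE, hij, h02 i j hij]
    have hEder : ∀ t ∈ Ioo a' b', HasDerivAt E (v t (E t)) t ∧ E t ∈ univ := by
      intro t ht
      refine ⟨?_, trivial⟩
      have hQt : Q t = t := hQeq t (Ioo_subset_Icc_self ht)
      refine hasDerivAt_pi.2 ?_
      rintro ⟨i, j⟩
      have h1 := (hode t i).mul (hode t j)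
      have h2 : HasDerivAt (fun s => if i = j then π s i else (0 : Matrix (Fin d) (Fin d) ℝ))
          (if i = j then (π t i * ξ * (∑ k, a i k • π t k) + (∑ k, a i k • π t k) * ξ * π t i)
            else 0) t := by
        split_ifs with hij
        · exact hode t i
        · exact hasDerivAt_const _ _
      have h3 := h1.sub h2
      have hkey := key_alg ξ a ha (π t) i j
      convert h3 using 1
      · rfl
      simp only [hv, hE, hQt]
      rw [← hkey]
    have hgder : ∀ t ∈ Ioo a' b',
        HasDerivAt (fun _ : ℝ => (0 : (Fin d × Fin d) → Matrix (Fin d) (Fin d) ℝ))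
          (v t ((fun _ => 0) t)) t ∧ (0 : (Fin d × Fin d) → Matrix (Fin d) (Fin d) ℝ) ∈ univ := by
      intro t ht
      refine ⟨?_, trivial⟩
      rw [hv0 t]
      exact hasDerivAt_const _ _
    have huniq := ODE_solution_unique_of_mem_Ioo (v := v) (s := fun _ => univ) (K := KN)
      (fun t _ => hlip t) (t₀ := 0) ⟨ha0, hb0⟩ hEder hgder (by simpa using hE0)
    have hEt : E t₁ = 0 := huniq ⟨hat, htb⟩
    have := congrFun hEt (i₀, j₀)
    simp only [hE, Pi.zero_apply, sub_eq_zero] at this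
    exact this
  intro t
  refine ⟨hsum1 t, fun i j hij => ?_, fun i => ?_⟩
  · simpa [hij] using hrel t i j
  · simpa using hrel t i i
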